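/- There is a universal constant c > 0 such that for every integer d ≥ 1, every conductance C on Z^d, every u : Z^d → ℝ, every finitely supported η : Z^d → ℝ, every R > 0 and every k > 0, writing u_{−k,+}(x) = (u(x) − k)_+, one has: Σ_{x,y∈B_R} (u(x) − u(y)) (u_{−k,+}(x)η²(x) − u_{−k,+}(y)η²(y)) C_{x,y} ≥ Σ_{x,y∈B_R} (u_{−k,+}(x) − u_{−k,+}(y)) (u_{−k,+}(x)η²(x) − u_{−k,+}(y)η²(y)) C_{x,y} ≥ (1/2) Σ_{x,y∈B_R} (u_{−k,+}(x) − u_{−k,+}(y))² max{η²(x), η²(y)} C_{x,y} − c Σ_{x,y∈B_R} max{u_{−k,+}²(x), u_{−k,+}²(y)} (η(x) − η(y))² C_{x,y}. -/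
import Mathlib


open scoped BigOperators ENNReal Classical
open MeasureTheory

noncomputable section

abbrev Zd (d : ℕ) := Fin d → ℤ

/-- Euclidean norm of a lattice point. -/
def znorm {d : ℕ} (x : Zd d) : ℝ := Real.sqrt (∑ i, ((x i : ℝ)) ^ 2)

/-- The ball `B_R = {z : |z| ≤ R}` as a finite set. -/
def zball (d : ℕ) (R : ℝ) : Finset (Zd d) :=
  (Finset.Icc (fun _ => (-⌈R⌉ : ℤ)) fun _ => (⌈R⌉ : ℤ)).filter fun z => znorm z ≤ R

/-- A conductance: symmetric, nonnegative, vanishing on the diagonal. -/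
def IsConductance {d : ℕ} (C : Zd d → Zd d → ℝ) : Prop :=
  (∀ x y, 0 ≤ C x y) ∧ (∀ x y, C x y = C y x) ∧ ∀ x, C x x = 0

def muC {d : ℕ} (C : Zd d → Zd d → ℝ) (x : Zd d) : ℝ :=
  ∑' z : Zd d, znorm z ^ 2 * C x (x + z)

def muM {d : ℕ} (C : Zd d → Zd d → ℝ) (m : ℝ) (x : Zd d) : ℝ :=
  ∑' z : Zd d, znorm z ^ m * C x (x + z)

def nuC {d : ℕ} (C : Zd d → Zd d → ℝ) (x : Zd d) : ℝ :=
  ∑ z ∈ (zball d 1).filter (fun z => znorm z = 1), (C x (x + z))⁻¹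

/-- normalized ℓ^p norm over a finite set, `p` finite. -/
def pnorm {d : ℕ} (p : ℝ) (A : Finset (Zd d)) (f : Zd d → ℝ) : ℝ :=
  ((A.card : ℝ)⁻¹ * ∑ x ∈ A, |f x| ^ p) ^ (1 / p)

/-- normalized ℓ^p norm over a finite set, allowing `p = ∞`. -/
def pnormE {d : ℕ} (p : ℝ≥0∞) (A : Finset (Zd d)) (f : Zd d → ℝ) : ℝ :=
  if p = ∞ then sSup ((fun x => |f x|) '' (A : Set (Zd d))) else pnorm p.toReal A f

/-- real value of `1/p` for `p ∈ (1,∞]` (gives `0` at `p = ∞`). -/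
def rinv (p : ℝ≥0∞) : ℝ := p⁻¹.toReal

/-- conjugate exponent `p_* = p/(p-1)`, with `p_* = 1` when `p = ∞`. -/
def pconj (p : ℝ≥0∞) : ℝ := if p = ∞ then 1 else p.toReal / (p.toReal - 1)

/-- tail of `v` at scale `R`. -/
def tailT {d : ℕ} (C : Zd d → Zd d → ℝ) (v : Zd d → ℝ) (R : ℝ) (x : Zd d) : ℝ :=
  R ^ 2 * ∑' y : Zd d, if R < znorm y then v y * C x y else 0

/-- caloric on `[a,b] × B_R`: `∂ₜ u = ℒu`, all sums converging (absolutely). -/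
def Caloric {d : ℕ} (C : Zd d → Zd d → ℝ) (u : ℝ → Zd d → ℝ) (a b R : ℝ) : Prop :=
  ∀ t ∈ Set.Icc a b, ∀ x ∈ zball d R,
    Summable (fun y : Zd d => (u t y - u t x) * C x y) ∧
    HasDerivAt (fun s => u s x) (∑' y : Zd d, (u t y - u t x) * C x y) t

/-- space-time norm `‖u‖_{p,p'}` over `[a,b] × B_r`. -/
def stnorm {d : ℕ} (p p' : ℝ) (a b r : ℝ) (u : ℝ → Zd d → ℝ) : ℝ :=
  ((b - a)⁻¹ * ∫ t in a..b, (pnorm p (zball d r) (u t)) ^ p') ^ (1 / p')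

/-- product of Lebesgue and counting measure on `ℝ × Zd d`. -/
def pcm (d : ℕ) : Measure (ℝ × Zd d) := (volume : Measure ℝ).prod Measure.count

/-- Lemma 2.4 (after [DKP]). -/

lemma pt2aux (a b s t : ℝ) (hb : 0 ≤ b) (h : b ≤ a) :
    (a-b)*(a*s^2 - b*t^2) ≥ (1/2)*(a-b)^2*max (s^2) (t^2) - 6*(max (a^2) (b^2))*(s-t)^2 := by
  rw [max_eq_left (by nlinarith : b^2 ≤ a^2)]
  rcases le_total (t^2) (s^2) with h2 | h2
  · rw [max_eq_left h2]
    nlinarith [sq_nonneg (s-t), sq_nonneg (a-b), sq_nonneg ((a-b)*s + b*(s-t)),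
      sq_nonneg ((a-b)*t), sq_nonneg (b*(s-t)), mul_nonneg hb (sub_nonneg.2 h)]
  · rw [max_eq_right h2]
    nlinarith [sq_nonneg ((a-b)*s - 3*b*(t-s)), sq_nonneg ((a-b)*s + 3*b*(t-s)),
      sq_nonneg ((a-b)*s - 3*(a-b)*(t-s)), sq_nonneg ((a-b)*s + 3*(a-b)*(t-s)),
      mul_nonneg (sq_nonneg (t-s)) (by nlinarith : (0:ℝ) ≤ a^2 - (a-b)*b),
      mul_nonneg (sq_nonneg (t-s)) (by nlinarith : (0:ℝ) ≤ a^2 - b^2),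
      mul_nonneg (sq_nonneg (t-s)) (by nlinarith : (0:ℝ) ≤ a^2 - (a-b)^2)]

lemma pt2 (a b s t : ℝ) (ha : 0 ≤ a) (hb : 0 ≤ b) :
    (a-b)*(a*s^2 - b*t^2) ≥ (1/2)*(a-b)^2*max (s^2) (t^2) - 6*(max (a^2) (b^2))*(s-t)^2 := by
  rcases le_total b a with h | h
  · exact pt2aux a b s t hb h
  · have := pt2aux b a t s ha h
    rw [max_comm (t^2), max_comm (b^2)] at this
    nlinarith [this]

lemma pt1 (k ux uy s t : ℝ) :
    (ux - uy) * (max (ux-k) 0 * s^2 - max (uy-k) 0 * t^2) ≥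
    (max (ux-k) 0 - max (uy-k) 0) * (max (ux-k) 0 * s^2 - max (uy-k) 0 * t^2) := by
  rcases le_total (ux-k) 0 with hx | hx <;> rcases le_total (uy-k) 0 with hy | hy <;>
    simp [max_eq_left, max_eq_right, hx, hy]
  · nlinarith [mul_nonneg (mul_nonneg (neg_nonneg.2 hx) hy) (sq_nonneg t)]
  · nlinarith [mul_nonneg (mul_nonneg (neg_nonneg.2 hy) hx) (sq_nonneg s)]

theorem statement1 :
    ∃ c : ℝ, 0 < c ∧
      ∀ (d : ℕ), 1 ≤ d → ∀ C : Zd d → Zd d → ℝ, IsConductance C →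
        ∀ u η : Zd d → ℝ, (Function.support η).Finite →
          ∀ R : ℝ, 0 < R → ∀ k : ℝ, 0 < k →
            (∑ x ∈ zball d R, ∑ y ∈ zball d R,
                (u x - u y) * (max (u x - k) 0 * η x ^ 2 - max (u y - k) 0 * η y ^ 2) * C x y ≥
              ∑ x ∈ zball d R, ∑ y ∈ zball d R,
                (max (u x - k) 0 - max (u y - k) 0) *
                  (max (u x - k) 0 * η x ^ 2 - max (u y - k) 0 * η y ^ 2) * C x y) ∧
            (∑ x ∈ zball d R, ∑ y ∈ zball d R,
                (max (u x - k) 0 - max (u y - k) 0) *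
                  (max (u x - k) 0 * η x ^ 2 - max (u y - k) 0 * η y ^ 2) * C x y ≥
              (1 / 2) * ∑ x ∈ zball d R, ∑ y ∈ zball d R,
                    (max (u x - k) 0 - max (u y - k) 0) ^ 2 * max (η x ^ 2) (η y ^ 2) * C x y -
                c * ∑ x ∈ zball d R, ∑ y ∈ zball d R,
                      max ((max (u x - k) 0) ^ 2) ((max (u y - k) 0) ^ 2) * (η x - η y) ^ 2 *
                        C x y) := by
  refine ⟨6, by norm_num, ?_⟩
  intro d _ C hC u η _ R _ k _
  obtain ⟨hC0, -, -⟩ := hC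
  set B := zball d R
  constructor
  · refine Finset.sum_le_sum fun x _ => Finset.sum_le_sum fun y _ => ?_
    exact mul_le_mul_of_nonneg_right (pt1 k (u x) (u y) (η x) (η y)) (hC0 x y)
  · have h1 : ∀ x y : Zd d,
        ((1/2) * (max (u x - k) 0 - max (u y - k) 0) ^ 2 * max (η x ^ 2) (η y ^ 2)
          - 6 * (max ((max (u x - k) 0) ^ 2) ((max (u y - k) 0) ^ 2) * (η x - η y) ^ 2)) * C x y
        ≤ (max (u x - k) 0 - max (u y - k) 0) *
            (max (u x - k) 0 * η x ^ 2 - max (u y - k) 0 * η y ^ 2) * C x y := by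
      intro x y
      refine mul_le_mul_of_nonneg_right ?_ (hC0 x y)
      have := pt2 (max (u x - k) 0) (max (u y - k) 0) (η x) (η y)
        (le_max_right _ _) (le_max_right _ _)
      linarith
    have hsum := Finset.sum_le_sum fun x (_ : x ∈ B) =>
      Finset.sum_le_sum fun y (_ : y ∈ B) => h1 x y
    have heq : (∑ x ∈ B, ∑ y ∈ B,
        ((1/2) * (max (u x - k) 0 - max (u y - k) 0) ^ 2 * max (η x ^ 2) (η y ^ 2)
          - 6 * (max ((max (u x - k) 0) ^ 2) ((max (u y - k) 0) ^ 2) * (η x - η y) ^ 2)) * C x y)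
        = (1/2) * ∑ x ∈ B, ∑ y ∈ B,
              (max (u x - k) 0 - max (u y - k) 0) ^ 2 * max (η x ^ 2) (η y ^ 2) * C x y
          - 6 * ∑ x ∈ B, ∑ y ∈ B,
              max ((max (u x - k) 0) ^ 2) ((max (u y - k) 0) ^ 2) * (η x - η y) ^ 2 * C x y := by
      rw [Finset.mul_sum, Finset.mul_sum, ← Finset.sum_sub_distrib]
      refine Finset.sum_congr rfl fun x _ => ?_
      rw [Finset.mul_sum, Finset.mul_sum, ← Finset.sum_sub_distrib]
      exact Finset.sum_congr rfl fun y _ => by ring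
    rw [heq] at hsum
    exact hsum


end
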